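/- (Integration by parts for the left ABC fractional derivative) Let 0 < α < 1, B(α) > 0, and let f, g : [a,b] → ℝ be continuously differentiable. Then ∫_a^b g(t) · ^{ABC}_a D^α f(t) dt = ∫_a^b f(t) · ^{ABR}D_b^α g(t) dt + (B(α)/(1-α)) · [f(t) · E^1_{α,1,-α/(1-α),b^-} g(t)]_a^b. -/

import Mathlib

open intervalIntegral

/-- One-parameter Mittag-Leffler function. -/
noncomputable def mittagLeffler (α z : ℝ) : ℝ :=
  ∑' k : ℕ, z ^ k / Real.Gamma (α * k + 1)

/-- Left ABC fractional derivative with Mittag-Leffler kernel. -/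
noncomputable def ABCleft (B α a : ℝ) (f : ℝ → ℝ) (t : ℝ) : ℝ :=
  (B / (1 - α)) * ∫ s in a..t, deriv f s * mittagLeffler α (-(α / (1 - α)) * (t - s) ^ α)

/-- Right ABR fractional derivative with Mittag-Leffler kernel. -/
noncomputable def ABRright (B α b : ℝ) (g : ℝ → ℝ) (t : ℝ) : ℝ :=
  -(B / (1 - α)) *
    deriv (fun x => ∫ s in x..b, g s * mittagLeffler α (-(α / (1 - α)) * (s - x) ^ α)) t

/-- Right generalized fractional integral operator `E^1_{α,1,-α/(1-α),b^-}`. -/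
noncomputable def Eright (α b : ℝ) (g : ℝ → ℝ) (t : ℝ) : ℝ :=
  ∫ s in t..b, mittagLeffler α (-(α / (1 - α)) * (s - t) ^ α) * g s


open MeasureTheory Set Filter

section ABCaux
variable {a b : ℝ} {K J g G' : ℝ → ℝ}

lemma ml_summable {α : ℝ} (hα0 : 0 < α) (hα1 : α < 1) (z : ℝ) :
    Summable (fun k : ℕ => z ^ k / Real.Gamma (α * k + 1)) := by
  apply summable_of_ratio_norm_eventually_le (r := 1/2) (by norm_num)
  have htend : Tendsto (fun k : ℕ => (α * k + α) ^ α) atTop atTop := by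
    apply (tendsto_rpow_atTop hα0).comp
    apply tendsto_atTop_add_const_right
    exact (tendsto_natCast_atTop_atTop).const_mul_atTop hα0
  filter_upwards [htend.eventually_ge_atTop (2 * (|z| + 1))] with k hk
  have hx : (0:ℝ) < α * k + α := by positivity
  have hg1 : (0:ℝ) < Real.Gamma (α * k + 1) := by
    apply Real.Gamma_pos_of_pos; positivity
  have hg2 : (0:ℝ) < Real.Gamma (α * k + α + 1) := by
    apply Real.Gamma_pos_of_pos; positivity
  -- log convexity bound : Γ(αk+1) ≤ Γ(αk+α+1) / (αk+α)^α
  have hconv : Real.Gamma (α * k + 1) * (α * k + α) ^ α ≤ Real.Gamma (α * k + α + 1) := by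
    have h := Real.Gamma_mul_add_mul_le_rpow_Gamma_mul_rpow_Gamma
      (s := α * k + α + 1) (t := α * k + α) (a := 1 - α) (b := α)
      (by positivity) hx (by linarith) hα0 (by ring)
    have harg : (1 - α) * (α * k + α + 1) + α * (α * k + α) = α * k + 1 := by ring
    rw [harg] at h
    have hGadd : Real.Gamma (α * k + α + 1) = (α * k + α) * Real.Gamma (α * k + α) :=
      Real.Gamma_add_one hx.ne'
    have hgx : (0:ℝ) < Real.Gamma (α * k + α) := Real.Gamma_pos_of_pos hx
    -- Γ(x+1)^(1-α) * Γ(x)^α = Γ(x+1) / x^α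
    have key : Real.Gamma (α * k + α + 1) ^ (1 - α) * Real.Gamma (α * k + α) ^ α
        = Real.Gamma (α * k + α + 1) / (α * k + α) ^ α := by
      rw [hGadd, Real.mul_rpow hx.le hgx.le]
      rw [mul_assoc, ← Real.rpow_add hgx, sub_add_cancel, Real.rpow_one,
        Real.rpow_sub hx, Real.rpow_one]
      ring
    rw [key] at h
    rw [← le_div_iff₀ (Real.rpow_pos_of_pos hx α)]
    exact h
  -- conclude ratio bound
  have hz : |z| ≤ |z| + 1 := by linarith
  have habs : (0:ℝ) < |z| + 1 := by positivity
  have hGint : Real.Gamma (α * k + 1) * (2 * (|z| + 1)) ≤ Real.Gamma (α * k + α + 1) := by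
    calc Real.Gamma (α * k + 1) * (2 * (|z| + 1)) ≤ Real.Gamma (α * k + 1) * ((α * k + α) ^ α) :=
          by exact mul_le_mul_of_nonneg_left hk hg1.le
      _ ≤ _ := hconv
  have hcast : α * (↑(k+1) : ℝ) + 1 = α * k + α + 1 := by push_cast; ring
  rw [hcast]
  rw [Real.norm_eq_abs, Real.norm_eq_abs, abs_div, abs_div, abs_pow, abs_pow,
    abs_of_pos hg1, abs_of_pos hg2]
  rw [div_le_iff₀ hg2, pow_succ]
  rw [show (1:ℝ) / 2 * (|z| ^ k / Real.Gamma (α * k + 1)) * Real.Gamma (α * k + α + 1)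
      = (|z| ^ k * Real.Gamma (α * k + α + 1)) / (2 * Real.Gamma (α * k + 1)) by
    field_simp]
  rw [le_div_iff₀ (by positivity)]
  have hp : (0:ℝ) ≤ |z| ^ k := by positivity
  nlinarith [abs_nonneg z, mul_le_mul_of_nonneg_left hGint hp]

lemma ml_continuous {α : ℝ} (hα0 : 0 < α) (hα1 : α < 1) :
    Continuous (mittagLeffler α) := by
  rw [continuous_iff_continuousAt]
  intro z₀
  set R : ℝ := |z₀| + 1 with hR
  have hR0 : 0 < R := by positivity
  have hclamp : Continuous (fun z : ℝ => max (-R) (min z R)) :=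
    continuous_const.max (continuous_id.min continuous_const)
  have habs : ∀ z : ℝ, |max (-R) (min z R)| ≤ R := by
    intro z
    rw [abs_le]
    constructor
    · exact le_max_left _ _
    · exact max_le (by linarith) (min_le_right _ _)
  have hGpos : ∀ k : ℕ, 0 < Real.Gamma (α * k + 1) := fun k =>
    Real.Gamma_pos_of_pos (by positivity)
  have hcont : Continuous (fun z : ℝ => ∑' k : ℕ,
      (max (-R) (min z R)) ^ k / Real.Gamma (α * k + 1)) := by
    apply continuous_tsum (u := fun k : ℕ => R ^ k / Real.Gamma (α * k + 1))
    · intro k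
      exact (hclamp.pow k).div_const _
    · exact ml_summable hα0 hα1 R
    · intro k z
      rw [Real.norm_eq_abs, abs_div, abs_pow, abs_of_pos (hGpos k)]
      rw [div_le_div_iff_of_pos_right (hGpos k)]
      exact pow_le_pow_left₀ (abs_nonneg _) (habs z) k
  have heq : (fun z : ℝ => ∑' k : ℕ, (max (-R) (min z R)) ^ k / Real.Gamma (α * k + 1))
      =ᶠ[nhds z₀] mittagLeffler α := by
    have hmem : Set.Ioo (-R) R ∈ nhds z₀ := by
      apply Ioo_mem_nhds <;> [skip; skip] <;> cases' abs_lt.mp (show |z₀| < R by rw [hR]; linarith) with h1 h2 <;> linarith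
    filter_upwards [hmem] with z hz
    have : max (-R) (min z R) = z := by
      rw [min_eq_left hz.2.le, max_eq_right hz.1.le]
    rw [mittagLeffler, this]
  exact (hcont.continuousAt).congr heq

lemma K_cont {α ω : ℝ} (hα0 : 0 < α) (hα1 : α < 1) :
    Continuous (fun u : ℝ => mittagLeffler α (ω * u ^ α)) :=
  (ml_continuous hα0 hα1).comp (continuous_const.mul (Real.continuous_rpow_const hα0.le))

lemma triangle_fubini {a b : ℝ} (hab : a ≤ b) {Φ : ℝ → ℝ → ℝ}
    (hΦ : Continuous fun p : ℝ × ℝ => Φ p.1 p.2) :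
    ∫ t in a..b, (∫ s in a..t, Φ t s) = ∫ s in a..b, (∫ t in s..b, Φ t s) := by
  have hmeas : MeasurableSet {q : ℝ × ℝ | q.2 ≤ q.1} :=
    measurableSet_le measurable_snd measurable_fst
  have hint : Integrable (Function.uncurry fun t s => (Set.Iic t).indicator (Φ t) s)
      ((volume.restrict (Set.Ioc a b)).prod (volume.restrict (Set.Ioc a b))) := by
    have huncurry : (Function.uncurry fun t s => (Set.Iic t).indicator (Φ t) s)
        = Set.indicator {q : ℝ × ℝ | q.2 ≤ q.1} (fun q => Φ q.1 q.2) := by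
      ext q
      by_cases h : q.2 ≤ q.1
      · simp [Function.uncurry, Set.indicator_of_mem, h, Set.mem_Iic, Set.mem_setOf_eq]
      · simp [Function.uncurry, Set.indicator_of_notMem, h, Set.mem_Iic, Set.mem_setOf_eq]
    rw [huncurry, Measure.prod_restrict]
    have hbase : IntegrableOn (fun q : ℝ × ℝ => Φ q.1 q.2) (Set.Ioc a b ×ˢ Set.Ioc a b) := by
      apply IntegrableOn.mono_set (t := Set.Icc a b ×ˢ Set.Icc a b)
      · exact hΦ.continuousOn.integrableOn_compact (isCompact_Icc.prod isCompact_Icc)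
      · exact Set.prod_mono Set.Ioc_subset_Icc_self Set.Ioc_subset_Icc_self
    exact hbase.indicator hmeas
  have swap := MeasureTheory.integral_integral_swap hint
  have lhs_eq : ∫ t in a..b, (∫ s in a..t, Φ t s)
      = ∫ t in Set.Ioc a b, (∫ s in Set.Ioc a b, (Set.Iic t).indicator (Φ t) s) := by
    rw [intervalIntegral.integral_of_le hab]
    apply setIntegral_congr_fun measurableSet_Ioc
    intro t ht
    simp only []
    rw [intervalIntegral.integral_of_le ht.1.le, setIntegral_indicator measurableSet_Iic,
      Set.Ioc_inter_Iic, min_eq_right ht.2]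
  have rhs_eq : ∫ s in a..b, (∫ t in s..b, Φ t s)
      = ∫ s in Set.Ioc a b, (∫ t in Set.Ioc a b, (Set.Iic t).indicator (Φ t) s) := by
    rw [intervalIntegral.integral_of_le hab]
    apply setIntegral_congr_fun measurableSet_Ioc
    intro s hs
    simp only []
    have h1 : ∀ t : ℝ, (Set.Iic t).indicator (Φ t) s = (Set.Ici s).indicator (fun t => Φ t s) t := by
      intro t
      by_cases h : s ≤ t
      · rw [Set.indicator_of_mem (Set.mem_Iic.2 h), Set.indicator_of_mem (Set.mem_Ici.2 h)]
      · rw [Set.indicator_of_notMem (by simpa using h), Set.indicator_of_notMem (by simpa using h)]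
    simp_rw [h1]
    rw [setIntegral_indicator measurableSet_Ici]
    have h2 : Set.Ioc a b ∩ Set.Ici s = Set.Icc s b := by
      ext t
      simp only [Set.mem_inter_iff, Set.mem_Ioc, Set.mem_Ici, Set.mem_Icc]
      constructor
      · rintro ⟨⟨_, h2⟩, h3⟩; exact ⟨h3, h2⟩
      · rintro ⟨h3, h2⟩; exact ⟨⟨lt_of_lt_of_le hs.1 h3, h2⟩, h3⟩
    rw [h2, integral_Icc_eq_integral_Ioc, intervalIntegral.integral_of_le hs.2]
  rw [lhs_eq, rhs_eq]
  exact swap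

lemma rect_fubini {a x c d : ℝ} (hax : a ≤ x) (hcd : c ≤ d) {Φ : ℝ → ℝ → ℝ}
    (hΦ : Continuous fun p : ℝ × ℝ => Φ p.1 p.2) :
    ∫ t in a..x, (∫ s in c..d, Φ t s) = ∫ s in c..d, (∫ t in a..x, Φ t s) := by
  have hint : Integrable (Function.uncurry Φ)
      ((volume.restrict (Set.Ioc a x)).prod (volume.restrict (Set.Ioc c d))) := by
    rw [Measure.prod_restrict]
    apply IntegrableOn.mono_set (t := Set.Icc a x ×ˢ Set.Icc c d)
    · exact hΦ.continuousOn.integrableOn_compact (isCompact_Icc.prod isCompact_Icc)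
    · exact Set.prod_mono Set.Ioc_subset_Icc_self Set.Ioc_subset_Icc_self
  have swap := MeasureTheory.integral_integral_swap hint
  rw [intervalIntegral.integral_of_le hax, intervalIntegral.integral_of_le hcd]
  simp_rw [intervalIntegral.integral_of_le hcd, intervalIntegral.integral_of_le hax]
  exact swap

lemma contOn_parametric {a b : ℝ} (hab : a ≤ b) {φ ψ : ℝ → ℝ}
    (hφ : Continuous φ) (hψ : Continuous ψ) :
    ContinuousOn (fun t => ∫ s in t..b, ψ s * φ (s - t)) (Set.Icc a b) := by
  obtain ⟨Mψ, hMψ⟩ := isCompact_Icc.exists_bound_of_continuousOn (f := ψ)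
    (hψ.continuousOn (s := Set.Icc a b))
  obtain ⟨Mφ, hMφ⟩ := isCompact_Icc.exists_bound_of_continuousOn (f := φ)
    (hφ.continuousOn (s := Set.Icc (a - b) (b - a)))
  have hMψ0 : 0 ≤ Mψ := le_trans (norm_nonneg _) (hMψ a ⟨le_refl a, hab⟩)
  have hMφ0 : 0 ≤ Mφ := le_trans (norm_nonneg _) (hMφ (a - b) ⟨le_refl _, by linarith⟩)
  intro t₀ ht₀
  set V : ℝ → ℝ := fun t => ∫ s in Set.Ioc a b, (Set.Ioi t).indicator
    (fun s => ψ s * φ (s - t)) s with hV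
  have heqOn : ∀ t ∈ Set.Icc a b, (∫ s in t..b, ψ s * φ (s - t)) = V t := by
    intro t ht
    rw [hV]
    simp only []
    rw [setIntegral_indicator measurableSet_Ioi]
    have : Set.Ioc a b ∩ Set.Ioi t = Set.Ioc t b := by
      ext s
      simp only [Set.mem_inter_iff, Set.mem_Ioc, Set.mem_Ioi]
      constructor
      · rintro ⟨⟨_, h2⟩, h3⟩; exact ⟨h3, h2⟩
      · rintro ⟨h3, h2⟩; exact ⟨⟨lt_of_le_of_lt ht.1 h3, h2⟩, h3⟩
    rw [this, intervalIntegral.integral_of_le ht.2]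
  have hVc : ContinuousWithinAt V (Set.Icc a b) t₀ := by
    apply MeasureTheory.continuousWithinAt_of_dominated
      (bound := fun _ => Mψ * Mφ)
    · apply Filter.Eventually.of_forall
      intro t
      exact (((hψ.mul (hφ.comp (continuous_id.sub continuous_const))).aestronglyMeasurable)).indicator
        measurableSet_Ioi
    · filter_upwards [self_mem_nhdsWithin] with t ht
      rw [ae_restrict_iff' measurableSet_Ioc]
      apply Filter.Eventually.of_forall
      intro s hs
      by_cases h : s ∈ Set.Ioi t
      · rw [Set.indicator_of_mem h]
        rw [Real.norm_eq_abs, abs_mul]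
        have h1 : |ψ s| ≤ Mψ := by
          have := hMψ s ⟨hs.1.le, hs.2⟩; rwa [Real.norm_eq_abs] at this
        have h2 : |φ (s - t)| ≤ Mφ := by
          have := hMφ (s - t) ⟨by cases ht; cases hs; linarith, by cases ht; cases hs; linarith⟩
          rwa [Real.norm_eq_abs] at this
        exact mul_le_mul h1 h2 (abs_nonneg _) hMψ0
      · rw [Set.indicator_of_notMem h]
        simp only [norm_zero]
        positivity
    · exact integrableOn_const measure_Ioc_lt_top.ne
    · have hne : ∀ᵐ s ∂(volume.restrict (Set.Ioc a b)), s ≠ t₀ := by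
        apply ae_restrict_of_ae
        rw [Filter.Eventually]
        have : {s : ℝ | s ≠ t₀}ᶜ = {t₀} := by ext s; simp
        apply (MeasureTheory.mem_ae_iff).2
        rw [this]
        exact Real.volume_singleton
      filter_upwards [hne] with s hs
      apply ContinuousAt.continuousWithinAt
      rcases lt_or_gt_of_ne hs with hlt | hgt
      · -- s < t₀ : eventually 0
        have hev : (fun t => (Set.Ioi t).indicator (fun s => ψ s * φ (s - t)) s)
            =ᶠ[nhds t₀] fun _ => (0:ℝ) := by
          filter_upwards [Ioi_mem_nhds hlt] with t ht
          exact Set.indicator_of_notMem (by simpa using le_of_lt ht) _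
        exact continuousAt_const.congr_of_eventuallyEq hev
      · -- t₀ < s : eventually ψ s * φ (s - t)
        have hev : (fun t => (Set.Ioi t).indicator (fun s => ψ s * φ (s - t)) s)
            =ᶠ[nhds t₀] fun t => ψ s * φ (s - t) := by
          filter_upwards [Iio_mem_nhds hgt] with t ht
          exact Set.indicator_of_mem (by simpa using ht) _
        exact ((continuousAt_const.mul ((hφ.continuousAt).comp
          (continuous_const.sub continuous_id).continuousAt))).congr_of_eventuallyEq hev
  exact hVc.congr heqOn (heqOn t₀ ht₀)

lemma rep5 (hK : Continuous K) (hJ : ∀ y, HasDerivAt J (K y) y) (hJ0 : J 0 = 0)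
    (hgc : ContinuousOn g (Set.Icc a b)) (hG'c : Continuous G')
    (hder : ∀ s ∈ Set.Ioo a b, HasDerivAt g (G' s) s) {x : ℝ} (hx : x ∈ Set.Icc a b) :
    ∫ s in x..b, g s * K (s - x) = g b * J (b - x) - ∫ s in x..b, G' s * J (s - x) := by
  have hJcont : Continuous J :=
    continuous_iff_continuousAt.2 fun y => (hJ y).continuousAt
  have hsub : ∀ x : ℝ, Continuous (fun s : ℝ => s - x) :=
    fun x => continuous_id.sub continuous_const
  have h1 : ContinuousOn (fun s => G' s * J (s - x) + g s * K (s - x)) (Set.Icc x b) := by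
    apply ContinuousOn.add
    · exact (hG'c.mul (hJcont.comp (hsub x))).continuousOn
    · exact (hgc.mono (Set.Icc_subset_Icc hx.1 le_rfl)).mul
        ((hK.comp (hsub x)).continuousOn)
  have key : ∫ s in x..b, (G' s * J (s - x) + g s * K (s - x))
      = g b * J (b - x) - g x * J (x - x) := by
    apply intervalIntegral.integral_eq_sub_of_hasDerivAt_of_le hx.2
    · exact (hgc.mono (Set.Icc_subset_Icc hx.1 le_rfl)).mul
        ((hJcont.comp (hsub x)).continuousOn)
    · intro s hs
      have hs' : s ∈ Set.Ioo a b := ⟨lt_of_le_of_lt hx.1 hs.1, hs.2⟩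
      have hgd := hder s hs'
      have hJd : HasDerivAt (fun s => J (s - x)) (K (s - x)) s := by
        simpa [Function.comp_def] using (hJ (s - x)).comp s ((hasDerivAt_id s).sub_const x)
      exact hgd.mul hJd
    · exact h1.intervalIntegrable_of_Icc hx.2
  rw [sub_self, hJ0, mul_zero, sub_zero] at key
  have hint1 : IntervalIntegrable (fun s => G' s * J (s - x)) volume x b :=
    ((hG'c.mul (hJcont.comp (hsub x))).continuousOn).intervalIntegrable_of_Icc hx.2
  have hint2 : IntervalIntegrable (fun s => g s * K (s - x)) volume x b :=
    ((hgc.mono (Set.Icc_subset_Icc hx.1 le_rfl)).mul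
      ((hK.comp (hsub x)).continuousOn)).intervalIntegrable_of_Icc hx.2
  rw [intervalIntegral.integral_add hint1 hint2] at key
  linarith


lemma h_identity (hab : a ≤ b) (hK : Continuous K) (hJ : ∀ y, HasDerivAt J (K y) y)
    (hJ0 : J 0 = 0) (hgc : ContinuousOn g (Set.Icc a b)) (hG'c : Continuous G')
    (hder : ∀ s ∈ Set.Ioo a b, HasDerivAt g (G' s) s) {x : ℝ} (hx : x ∈ Set.Icc a b) :
    ∫ s in x..b, g s * K (s - x)
      = (∫ s in a..b, g s * K (s - a))
        + ∫ t in a..x, (-(g b * K (b - t)) + ∫ s in t..b, G' s * K (s - t)) := by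
  have hJcont : Continuous J :=
    continuous_iff_continuousAt.2 fun y => (hJ y).continuousAt
  have hax : a ≤ x := hx.1
  have hxb : x ≤ b := hx.2
  have hJint : ∀ p q : ℝ, (∫ u in p..q, K u) = J q - J p := fun p q =>
    intervalIntegral.integral_eq_sub_of_hasDerivAt (fun y _ => hJ y) (hK.intervalIntegrable p q)
  set W : ℝ → ℝ := fun t => ∫ s in t..b, G' s * K (s - t) with hW
  set A : ℝ → ℝ := fun t => ∫ s in t..x, G' s * K (s - t) with hA
  set Bf : ℝ → ℝ := fun t => ∫ s in x..b, G' s * K (s - t) with hBf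
  have hkerint : ∀ (t p q : ℝ), IntervalIntegrable (fun s => G' s * K (s - t)) volume p q :=
    fun t p q => (hG'c.mul (hK.comp (continuous_id.sub continuous_const))).intervalIntegrable p q
  have hWcont : ContinuousOn W (Set.Icc a b) := contOn_parametric hab hK hG'c
  have hAcont : ContinuousOn A (Set.Icc a x) := contOn_parametric hax hK hG'c
  have hWAB : ∀ t, W t = A t + Bf t := fun t =>
    (intervalIntegral.integral_add_adjacent_intervals (hkerint t t x) (hkerint t x b)).symm
  have hAint : IntervalIntegrable A volume a x := hAcont.intervalIntegrable_of_Icc hax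
  have hBint : IntervalIntegrable Bf volume a x := by
    have : ContinuousOn Bf (Set.Icc a x) := by
      have : ∀ t, Bf t = W t - A t := fun t => by rw [hWAB t]; ring
      rw [funext this]
      exact (hWcont.mono (Set.Icc_subset_Icc le_rfl hxb)).sub hAcont
    exact this.intervalIntegrable_of_Icc hax
  -- evaluate ∫ A
  have hΦc : Continuous fun p : ℝ × ℝ => G' p.1 * K (p.1 - p.2) :=
    (hG'c.comp continuous_fst).mul (hK.comp (continuous_fst.sub continuous_snd))
  have hAeval : (∫ t in a..x, A t) = ∫ u in a..x, G' u * J (u - a) := by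
    have h := triangle_fubini hax (Φ := fun u v => G' u * K (u - v)) hΦc
    rw [← h]
    apply intervalIntegral.integral_congr
    intro u _
    simp only []
    rw [intervalIntegral.integral_const_mul, intervalIntegral.integral_comp_sub_left K u,
      sub_self, hJint, hJ0, sub_zero]
  -- evaluate ∫ Bf
  have hBeval : (∫ t in a..x, Bf t) = ∫ s in x..b, G' s * (J (s - a) - J (s - x)) := by
    have hΦc' : Continuous fun p : ℝ × ℝ => G' p.2 * K (p.2 - p.1) :=
      (hG'c.comp continuous_snd).mul (hK.comp (continuous_snd.sub continuous_fst))
    have h := rect_fubini hax hxb (Φ := fun t s => G' s * K (s - t)) hΦc'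
    rw [hBf]
    simp only []
    rw [h]
    apply intervalIntegral.integral_congr
    intro s _
    simp only []
    rw [intervalIntegral.integral_const_mul, intervalIntegral.integral_comp_sub_left K s,
      hJint]
  -- the outer integral of H
  have houter : (∫ t in a..x, (-(g b * K (b - t)) + W t))
      = -(g b * (J (b - a) - J (b - x))) + ((∫ u in a..x, G' u * J (u - a))
          + ∫ s in x..b, G' s * (J (s - a) - J (s - x))) := by
    have hint1 : IntervalIntegrable (fun t => -(g b * K (b - t))) volume a x :=
      ((continuous_const.mul (hK.comp (continuous_const.sub continuous_id))).neg).intervalIntegrable a x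
    have hint2 : IntervalIntegrable W volume a x :=
      (hWcont.mono (Set.Icc_subset_Icc le_rfl hxb)).intervalIntegrable_of_Icc hax
    rw [intervalIntegral.integral_add hint1 hint2]
    congr 1
    · rw [intervalIntegral.integral_neg, intervalIntegral.integral_const_mul,
        intervalIntegral.integral_comp_sub_left K b, hJint]
    · have : (∫ t in a..x, W t) = (∫ t in a..x, A t) + ∫ t in a..x, Bf t := by
        rw [← intervalIntegral.integral_add hAint hBint]
        exact intervalIntegral.integral_congr fun t _ => hWAB t
      rw [this, hAeval, hBeval]
  -- put together with rep5 at x and at a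
  have hrx := rep5 hK hJ hJ0 hgc hG'c hder hx
  have hra := rep5 hK hJ hJ0 hgc hG'c hder (Set.left_mem_Icc.2 hab)
  have hsplitJ : (∫ s in a..b, G' s * J (s - a))
      = (∫ s in a..x, G' s * J (s - a)) + ∫ s in x..b, G' s * J (s - a) := by
    have hi : ∀ p q : ℝ, IntervalIntegrable (fun s => G' s * J (s - a)) volume p q :=
      fun p q => (hG'c.mul (hJcont.comp (continuous_id.sub continuous_const))).intervalIntegrable p q
    exact (intervalIntegral.integral_add_adjacent_intervals (hi a x) (hi x b)).symm
  have hsub : (∫ s in x..b, G' s * (J (s - a) - J (s - x)))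
      = (∫ s in x..b, G' s * J (s - a)) - ∫ s in x..b, G' s * J (s - x) := by
    have h1 : IntervalIntegrable (fun s => G' s * J (s - a)) volume x b :=
      (hG'c.mul (hJcont.comp (continuous_id.sub continuous_const))).intervalIntegrable x b
    have h2 : IntervalIntegrable (fun s => G' s * J (s - x)) volume x b :=
      (hG'c.mul (hJcont.comp (continuous_id.sub continuous_const))).intervalIntegrable x b
    rw [← intervalIntegral.integral_sub h1 h2]
    exact intervalIntegral.integral_congr fun s _ => by ring
  rw [hrx, hra, houter, hsub, hsplitJ]
  ring

lemma hasDerivAt_h (hab : a ≤ b) (hK : Continuous K) (hJ : ∀ y, HasDerivAt J (K y) y)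
    (hJ0 : J 0 = 0) (hgc : ContinuousOn g (Set.Icc a b)) (hG'c : Continuous G')
    (hder : ∀ s ∈ Set.Ioo a b, HasDerivAt g (G' s) s) {t : ℝ} (ht : t ∈ Set.Ioo a b) :
    HasDerivAt (fun x => ∫ s in x..b, g s * K (s - x))
      (-(g b * K (b - t)) + ∫ s in t..b, G' s * K (s - t)) t := by
  set H : ℝ → ℝ := fun u => -(g b * K (b - u)) + ∫ s in u..b, G' s * K (s - u) with hH
  have hHcont : ContinuousOn H (Set.Icc a b) := by
    apply ContinuousOn.add
    · exact ((continuous_const.mul (hK.comp (continuous_const.sub continuous_id))).neg).continuousOn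
    · exact contOn_parametric hab hK hG'c
  have hHAt : ContinuousAt H t := hHcont.continuousAt (Icc_mem_nhds ht.1 ht.2)
  have hint : IntervalIntegrable H volume a t :=
    (hHcont.mono (Set.Icc_subset_Icc le_rfl ht.2.le)).intervalIntegrable_of_Icc ht.1.le
  have hmeas : StronglyMeasurableAtFilter H (nhds t) :=
    ⟨Set.Ioo a b, Ioo_mem_nhds ht.1 ht.2,
      (hHcont.mono Set.Ioo_subset_Icc_self).aestronglyMeasurable measurableSet_Ioo⟩
  have hFTC : HasDerivAt
      (fun x => (∫ s in a..b, g s * K (s - a)) + ∫ u in a..x, H u) (H t) t :=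
    (intervalIntegral.integral_hasDerivAt_right hint hmeas hHAt).const_add _
  apply hFTC.congr_of_eventuallyEq
  filter_upwards [Ioo_mem_nhds ht.1 ht.2] with x hx
  exact h_identity hab hK hJ hJ0 hgc hG'c hder (Set.Ioo_subset_Icc_self hx)


end ABCaux

/-- Integration by parts for the left ABC fractional derivative. -/
theorem ABC_left_integration_by_parts (a b α B : ℝ) (hab : a ≤ b)
    (hα0 : 0 < α) (hα1 : α < 1) (hB : 0 < B) (f g : ℝ → ℝ)
    (hf : ContDiffOn ℝ 1 f (Set.Icc a b)) (hg : ContDiffOn ℝ 1 g (Set.Icc a b)) :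
    (∫ t in a..b, g t * ABCleft B α a f t)
      = (∫ t in a..b, f t * ABRright B α b g t)
        + (B / (1 - α)) * (f b * Eright α b g b - f a * Eright α b g a) := by
  rcases eq_or_lt_of_le hab with rfl | hlt
  · simp [Eright, intervalIntegral.integral_same]
  clear hab
  have hab : a ≤ b := hlt.le
  set c : ℝ := B / (1 - α) with hc
  set K : ℝ → ℝ := fun u => mittagLeffler α (-(α / (1 - α)) * u ^ α) with hKdef
  have hK : Continuous K := K_cont hα0 hα1
  set J : ℝ → ℝ := fun y => ∫ u in (0:ℝ)..y, K u with hJdef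
  have hJ : ∀ y, HasDerivAt J (K y) y := by
    intro y
    exact intervalIntegral.integral_hasDerivAt_right (hK.intervalIntegrable 0 y)
      (hK.stronglyMeasurable.stronglyMeasurableAtFilter) hK.continuousAt
  have hJ0 : J 0 = 0 := intervalIntegral.integral_same
  -- clamp
  set clamp : ℝ → ℝ := fun x => max a (min x b) with hclampdef
  have hclamp_cont : Continuous clamp := continuous_const.max (continuous_id.min continuous_const)
  have hclamp_mem : ∀ x, clamp x ∈ Set.Icc a b := by
    intro x
    exact ⟨le_max_left _ _, max_le hab (min_le_right _ _)⟩
  have hclamp_id : ∀ x ∈ Set.Icc a b, clamp x = x := by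
    intro x hx
    rw [hclampdef]
    simp only []
    rw [min_eq_left hx.2, max_eq_right hx.1]
  -- clamped functions
  set G : ℝ → ℝ := fun x => g (clamp x) with hGdef
  have hGc : Continuous G := hg.continuousOn.comp_continuous hclamp_cont hclamp_mem
  set G' : ℝ → ℝ := fun x => derivWithin g (Set.Icc a b) (clamp x) with hG'def
  have hG'c : Continuous G' :=
    (hg.continuousOn_derivWithin (uniqueDiffOn_Icc hlt) le_rfl).comp_continuous
      hclamp_cont hclamp_mem
  set F' : ℝ → ℝ := fun x => derivWithin f (Set.Icc a b) (clamp x) with hF'def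
  have hF'c : Continuous F' :=
    (hf.continuousOn_derivWithin (uniqueDiffOn_Icc hlt) le_rfl).comp_continuous
      hclamp_cont hclamp_mem
  have hgder : ∀ s ∈ Set.Ioo a b, HasDerivAt g (G' s) s := by
    intro s hs
    have hmem : Set.Icc a b ∈ nhds s := Icc_mem_nhds hs.1 hs.2
    have hd : DifferentiableAt ℝ g s :=
      ((hg.differentiableOn one_ne_zero) s (Set.Ioo_subset_Icc_self hs)).differentiableAt hmem
    have : G' s = deriv g s := by
      rw [hG'def]
      simp only []
      rw [hclamp_id s (Set.Ioo_subset_Icc_self hs)]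
      exact derivWithin_of_mem_nhds hmem
    rw [this]
    exact hd.hasDerivAt
  have hfder' : ∀ s ∈ Set.Ioo a b, deriv f s = F' s := by
    intro s hs
    have hmem : Set.Icc a b ∈ nhds s := Icc_mem_nhds hs.1 hs.2
    rw [hF'def]
    simp only []
    rw [hclamp_id s (Set.Ioo_subset_Icc_self hs)]
    exact (derivWithin_of_mem_nhds hmem).symm
  -- the function h
  set h : ℝ → ℝ :=
    fun x => ∫ s in x..b, g s * mittagLeffler α (-(α / (1 - α)) * (s - x) ^ α) with hhdef
  have hhK : h = fun x => ∫ s in x..b, g s * K (s - x) := rfl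
  have hEr : ∀ x, Eright α b g x = h x := by
    intro x
    exact intervalIntegral.integral_congr fun s _ => mul_comm _ _
  set W : ℝ → ℝ := fun t => ∫ s in t..b, G' s * K (s - t) with hWdef
  set H : ℝ → ℝ := fun t => -(g b * K (b - t)) + W t with hHdef
  have hderiv_h : ∀ t ∈ Set.Ioo a b, HasDerivAt h (H t) t := by
    intro t ht
    exact hasDerivAt_h hab hK hJ hJ0 hg.continuousOn hG'c hgder ht
  have hHcontOn : ContinuousOn H (Set.Icc a b) := by
    apply ContinuousOn.add
    · exact ((continuous_const.mul (hK.comp (continuous_const.sub continuous_id))).neg).continuousOn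
    · exact contOn_parametric hab hK hG'c
  have hhcontOn : ContinuousOn h (Set.Icc a b) := by
    apply (contOn_parametric hab hK hGc).congr
    intro x hx
    rw [hhK]
    apply intervalIntegral.integral_congr
    intro s hs
    have hs' : s ∈ Set.Icc a b := by
      rcases le_total x b with hxb | hxb
      · rw [Set.uIcc_of_le hxb] at hs
        exact ⟨le_trans hx.1 hs.1, hs.2⟩
      · rw [Set.uIcc_of_ge hxb] at hs
        exact ⟨le_trans hab hs.1, le_trans hs.2 hx.2⟩
    rw [hGdef]
    simp only []
    rw [hclamp_id s hs']
  -- integration by parts for f * h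
  have hIBP : (∫ t in a..b, (F' t * h t + f t * H t)) = f b * h b - f a * h a := by
    apply intervalIntegral.integral_eq_sub_of_hasDerivAt_of_le hab
    · exact hf.continuousOn.mul hhcontOn
    · intro t ht
      have hfd : HasDerivAt f (F' t) t := by
        have hmem : Set.Icc a b ∈ nhds t := Icc_mem_nhds ht.1 ht.2
        have hd : DifferentiableAt ℝ f t :=
          ((hf.differentiableOn one_ne_zero) t (Set.Ioo_subset_Icc_self ht)).differentiableAt hmem
        have := hfder' t ht
        rw [← this]
        exact hd.hasDerivAt
      exact hfd.mul (hderiv_h t ht)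
    · exact ((hF'c.continuousOn.mul hhcontOn).add
        (hf.continuousOn.mul hHcontOn)).intervalIntegrable_of_Icc hab
  have hint_F'h : IntervalIntegrable (fun t => F' t * h t) volume a b :=
    (hF'c.continuousOn.mul hhcontOn).intervalIntegrable_of_Icc hab
  have hint_fH : IntervalIntegrable (fun t => f t * H t) volume a b :=
    (hf.continuousOn.mul hHcontOn).intervalIntegrable_of_Icc hab
  have hsplit : (∫ t in a..b, f t * H t)
      = (f b * h b - f a * h a) - ∫ t in a..b, F' t * h t := by
    rw [← hIBP, intervalIntegral.integral_add hint_F'h hint_fH]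
    ring
  -- a.e. t ≠ b
  have haeb : ∀ᵐ (t : ℝ), t ≠ b := by
    apply (MeasureTheory.mem_ae_iff).2
    have : {t : ℝ | t ≠ b}ᶜ = {b} := by ext t; simp
    rw [this]
    exact Real.volume_singleton
  -- RHS computation
  have hRHS1 : (∫ t in a..b, f t * ABRright B α b g t) = ∫ t in a..b, -(c * (f t * H t)) := by
    apply intervalIntegral.integral_congr_ae
    filter_upwards [haeb] with t htb hmem
    rw [Set.uIoc_of_le hab] at hmem
    have htIoo : t ∈ Set.Ioo a b := ⟨hmem.1, lt_of_le_of_ne hmem.2 htb⟩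
    have hd : deriv h t = H t := (hderiv_h t htIoo).deriv
    show f t * (-(B / (1 - α)) * deriv h t) = -(c * (f t * H t))
    rw [hd, ← hc]
    ring
  have hRHS : (∫ t in a..b, f t * ABRright B α b g t)
        + c * (f b * Eright α b g b - f a * Eright α b g a)
      = c * ∫ t in a..b, F' t * h t := by
    rw [hRHS1, intervalIntegral.integral_neg, intervalIntegral.integral_const_mul, hsplit,
      hEr b, hEr a]
    ring
  -- LHS computation
  have hLHS1 : (∫ t in a..b, g t * ABCleft B α a f t)
      = ∫ t in a..b, c * ∫ s in a..t, G t * (F' s * K (t - s)) := by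
    apply intervalIntegral.integral_congr_ae
    filter_upwards [haeb] with t htb hmem
    rw [Set.uIoc_of_le hab] at hmem
    have htIoo : t ∈ Set.Ioo a b := ⟨hmem.1, lt_of_le_of_ne hmem.2 htb⟩
    have hGt : G t = g t := by
      rw [hGdef]; simp only []; rw [hclamp_id t (Set.Ioo_subset_Icc_self htIoo)]
    have hinner : (∫ s in a..t, deriv f s * K (t - s)) = ∫ s in a..t, F' s * K (t - s) := by
      apply intervalIntegral.integral_congr_ae
      have haet : ∀ᵐ (s : ℝ), s ≠ t := by
        apply (MeasureTheory.mem_ae_iff).2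
        have : {s : ℝ | s ≠ t}ᶜ = {t} := by ext s; simp
        rw [this]
        exact Real.volume_singleton
      filter_upwards [haet] with s hst hsmem
      rw [Set.uIoc_of_le htIoo.1.le] at hsmem
      have hsIoo : s ∈ Set.Ioo a b := ⟨hsmem.1, lt_of_lt_of_le
        (lt_of_le_of_ne hsmem.2 hst) htIoo.2.le⟩
      rw [hfder' s hsIoo]
    show g t * (c * ∫ s in a..t, deriv f s * K (t - s)) = _
    rw [intervalIntegral.integral_const_mul, hinner, hGt]
    ring
  have hLHS : (∫ t in a..b, g t * ABCleft B α a f t) = c * ∫ s in a..b, F' s * h s := by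
    rw [hLHS1, intervalIntegral.integral_const_mul]
    congr 1
    have hΦc : Continuous fun p : ℝ × ℝ => G p.1 * (F' p.2 * K (p.1 - p.2)) :=
      (hGc.comp continuous_fst).mul ((hF'c.comp continuous_snd).mul
        (hK.comp (continuous_fst.sub continuous_snd)))
    rw [triangle_fubini hab hΦc]
    apply intervalIntegral.integral_congr
    intro s hs
    rw [Set.uIcc_of_le hab] at hs
    simp only []
    have : (∫ t in s..b, G t * (F' s * K (t - s))) = F' s * ∫ t in s..b, G t * K (t - s) := by
      rw [← intervalIntegral.integral_const_mul]
      apply intervalIntegral.integral_congr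
      intro t _
      ring
    rw [this]
    congr 1
    rw [hhK]
    apply intervalIntegral.integral_congr
    intro t ht
    rw [Set.uIcc_of_le hs.2] at ht
    have ht' : t ∈ Set.Icc a b := ⟨le_trans hs.1 ht.1, ht.2⟩
    rw [hGdef]
    simp only []
    rw [hclamp_id t ht']
  rw [hLHS, hRHS.symm, hc]
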